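/- Let A be a commutative ring, N its nilradical, I a proper ideal and J a finitely generated ideal of A. Let A₁ = A/N and I₁, J₁ the images of I, J in A₁. Then ν̄_I(J) = ν̄_{I₁}(J₁). -/

import Mathlib

open Filter ENNReal
open scoped NNReal

/-- The `I`-adic order `ν_I(J)` of an ideal `J`: the supremum of the `n` with `J ⊆ Iⁿ`,
as an extended nonnegative real (`∞` if `J ⊆ Iⁿ` for all `n`). -/
noncomputable def idealOrd {A : Type*} [CommRing A] (I J : Ideal A) : ℝ≥0∞ :=
  ⨆ n ∈ {n : ℕ | J ≤ I ^ n}, (n : ℝ≥0∞)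

/-- `ν̄_I(J) = lim_{k→∞} ν_I(Jᵏ)/k`.  (The limit exists, so it equals the `limsup`,
which we use as the definition.) -/
noncomputable def idealNubar {A : Type*} [CommRing A] (I J : Ideal A) : ℝ≥0∞ :=
  Filter.atTop.limsup fun k : ℕ => idealOrd I (J ^ k) / (k : ℝ≥0∞)

section Aux

variable {A : Type*} [CommRing A]

lemma le_idealOrd {I J : Ideal A} {n : ℕ} (h : J ≤ I ^ n) : (n : ℝ≥0∞) ≤ idealOrd I J :=
  le_biSup _ h

lemma idealOrd_div (I K : Ideal A) (c : ℝ≥0∞) :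
    idealOrd I K / c = ⨆ n ∈ {n : ℕ | K ≤ I ^ n}, (n : ℝ≥0∞) / c := by
  rw [idealOrd]
  simp only [ENNReal.iSup_div]

lemma idealOrd_top {I : Ideal A} (hI : I ≠ ⊤) : idealOrd I ⊤ = 0 := by
  refine le_antisymm ?_ (zero_le)
  refine iSup_le fun n => iSup_le fun hn => ?_
  match n with
  | 0 => simp
  | (m + 1) =>
    exact absurd (top_le_iff.mp (hn.trans (Ideal.pow_le_self (Nat.succ_ne_zero m)))) hI

/-- superlinearity along multiples -/
lemma ord_div_le_ord_div_mul {I J : Ideal A} (k s : ℕ) (hs : s ≠ 0) :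
    idealOrd I (J ^ k) / (k : ℝ≥0∞) ≤ idealOrd I (J ^ (k * s)) / ((k * s : ℕ) : ℝ≥0∞) := by
  rw [idealOrd_div]
  refine iSup_le fun n => iSup_le fun hn => ?_
  have h2 : J ^ (k * s) ≤ I ^ (n * s) := by
    rw [pow_mul, pow_mul]
    exact Ideal.pow_right_mono hn s
  have hs0 : (s : ℝ≥0∞) ≠ 0 := by exact_mod_cast hs
  calc (n : ℝ≥0∞) / (k : ℝ≥0∞) = ((n * s : ℕ) : ℝ≥0∞) / ((k * s : ℕ) : ℝ≥0∞) := by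
        push_cast
        rw [ENNReal.mul_div_mul_right _ _ hs0 (ENNReal.natCast_ne_top s)]
    _ ≤ idealOrd I (J ^ (k * s)) / ((k * s : ℕ) : ℝ≥0∞) :=
        ENNReal.div_le_div_right (le_idealOrd h2) _

lemma idealNubar_eq_iSup {I : Ideal A} (J : Ideal A) (hI : I ≠ ⊤) :
    idealNubar I J = ⨆ k : ℕ, idealOrd I (J ^ k) / (k : ℝ≥0∞) := by
  refine le_antisymm limsup_le_iSup (iSup_le fun k => ?_)
  rcases eq_or_ne k 0 with rfl | hk
  · simp [pow_zero, idealOrd_top hI]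
  · apply le_limsup_of_frequently_le'
    have htend : Tendsto (fun s : ℕ => k * (s + 1)) atTop atTop := by
      apply tendsto_atTop_mono (fun s => ?_) tendsto_id
      calc (s : ℕ) ≤ s + 1 := Nat.le_succ s
        _ ≤ k * (s + 1) := Nat.le_mul_of_pos_left _ (Nat.pos_of_ne_zero hk)
    exact htend.frequently (Frequently.of_forall fun s =>
      ord_div_le_ord_div_mul k (s + 1) (Nat.succ_ne_zero s))

lemma fg_pow_le_of_le_radical {I K : Ideal A} (hK : K.FG) (h : K ≤ I.radical) :
    ∃ n : ℕ, K ^ n ≤ I := by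
  revert h
  refine Submodule.fg_induction (motive := fun J _ => J ≤ I.radical → ∃ n : ℕ, J ^ n ≤ I) ?_ ?_ _ hK
  · intro x hx
    obtain ⟨n, hn⟩ := hx (Ideal.subset_span (Set.mem_singleton x))
    exact ⟨n, by rwa [← Ideal.span, Ideal.span_singleton_pow, Ideal.span_le,
      Set.singleton_subset_iff]⟩
  · intro J K _ _ hJ hK' hJK
    obtain ⟨n, hn⟩ := hJ fun x hx => hJK <| Ideal.mem_sup_left hx
    obtain ⟨m, hm⟩ := hK' fun x hx => hJK <| Ideal.mem_sup_right hx
    exact ⟨n + m, le_trans Ideal.sup_pow_add_le_pow_sup_pow (sup_le hn hm)⟩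

lemma ennreal_div_le_of_forall {n k T : ℕ} (hk : k ≠ 0) {S : ℝ≥0∞}
    (h : ∀ s : ℕ, ((n * s : ℕ) : ℝ≥0∞) / ((k * (s + T) : ℕ) : ℝ≥0∞) ≤ S) :
    (n : ℝ≥0∞) / (k : ℝ≥0∞) ≤ S := by
  rcases eq_or_ne T 0 with rfl | hT
  · simpa using h 1
  · refine ENNReal.le_of_forall_nnreal_lt fun r hr => ?_
    have hk0 : ((k : ℕ) : ℝ≥0∞) ≠ 0 := by exact_mod_cast hk
    have hrk : (r : ℝ≥0∞) * (k : ℝ≥0∞) < (n : ℝ≥0∞) :=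
      (ENNReal.lt_div_iff_mul_lt (Or.inl hk0) (Or.inl (ENNReal.natCast_ne_top k))).mp hr
    have hrkR : (r : ℝ) * (k : ℝ) < (n : ℝ) := by
      rw [← ENNReal.coe_natCast k, ← ENNReal.coe_natCast n, ← ENNReal.coe_mul,
        ENNReal.coe_lt_coe, ← NNReal.coe_lt_coe] at hrk
      push_cast at hrk
      exact hrk
    obtain ⟨s, hs⟩ := exists_nat_ge ((r : ℝ) * k * T / ((n : ℝ) - r * k))
    have hpos : (0 : ℝ) < (n : ℝ) - r * k := by linarith
    have hkey : (r : ℝ) * k * T ≤ s * ((n : ℝ) - r * k) := by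
      rw [div_le_iff₀ hpos] at hs
      linarith
    have hmain : (r : ℝ) * (k * (s + T) : ℕ) ≤ ((n * s : ℕ) : ℝ) := by
      push_cast
      nlinarith
    have hb0 : ((k * (s + T) : ℕ) : ℝ≥0∞) ≠ 0 := by
      have : k * (s + T) ≠ 0 := by positivity
      exact_mod_cast this
    refine le_trans ?_ (h s)
    rw [ENNReal.le_div_iff_mul_le (Or.inl hb0) (Or.inl (ENNReal.natCast_ne_top _))]
    rw [← ENNReal.coe_natCast (k * (s + T)), ← ENNReal.coe_natCast (n * s), ← ENNReal.coe_mul,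
      ENNReal.coe_le_coe, ← NNReal.coe_le_coe]
    push_cast
    push_cast at hmain
    linarith

end Aux

/-- If `N` is the nilradical of `A`, `I` a proper ideal, `J` a finitely
generated ideal, with images `I₁, J₁` in `A₁ = A/N`, then `ν̄_I(J) = ν̄_{I₁}(J₁)`. -/
theorem idealNubar_map_nilradical {A : Type*} [CommRing A] (I J : Ideal A)
    (hI : I ≠ ⊤) (hJ : J.FG) :
    idealNubar I J =
      idealNubar (I.map (Ideal.Quotient.mk (nilradical A)))
        (J.map (Ideal.Quotient.mk (nilradical A))) := by
  set π := Ideal.Quotient.mk (nilradical A) with hπdef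
  have hπ : Function.Surjective π := Ideal.Quotient.mk_surjective
  have hcomap : ∀ K : Ideal A, (K.map π).comap π = K ⊔ nilradical A := by
    intro K
    rw [Ideal.comap_map_of_surjective π hπ, ← RingHom.ker_eq_comap_bot, Ideal.mk_ker]
  have hI₁ : I.map π ≠ ⊤ := by
    intro h
    apply hI
    have h1 : (1 : A) ∈ (I.map π).comap π := by rw [h]; trivial
    rw [hcomap] at h1
    obtain ⟨a, ha, e, he, hae⟩ := Submodule.mem_sup.mp h1
    have hu : IsUnit a := by
      have : a = 1 - e := by rw [← hae]; ring
      rw [this]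
      exact (mem_nilradical.mp he).isUnit_one_sub
    exact Ideal.eq_top_of_isUnit_mem _ ha hu
  rw [idealNubar_eq_iSup J hI, idealNubar_eq_iSup (J.map π) hI₁]
  apply le_antisymm
  · refine iSup_le fun k => le_trans ?_ (le_iSup _ k)
    apply ENNReal.div_le_div_right
    refine biSup_mono fun n hn => ?_
    rw [Set.mem_setOf_eq] at hn ⊢
    rw [← Ideal.map_pow, ← Ideal.map_pow]
    exact Ideal.map_mono hn
  · refine iSup_le fun k => ?_
    rcases eq_or_ne k 0 with rfl | hk
    · simp [pow_zero, idealOrd_top hI₁]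
    rw [idealOrd_div]
    refine iSup_le fun n => iSup_le fun hn => ?_
    rw [Set.mem_setOf_eq] at hn
    -- from hn : (J.map π)^k ≤ (I.map π)^n, get J^k ≤ I^n ⊔ nilradical A
    have h1 : J ^ k ≤ I ^ n ⊔ nilradical A := by
      calc J ^ k ≤ ((J ^ k).map π).comap π := Ideal.le_comap_map
        _ ≤ ((I ^ n).map π).comap π := by
            refine Ideal.comap_mono ?_
            rw [Ideal.map_pow, Ideal.map_pow]
            exact hn
        _ = I ^ n ⊔ nilradical A := hcomap _
    obtain ⟨t, ht⟩ := Submodule.FG.pow hJ k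
    have hy : ∀ y ∈ t, ∃ e, e ∈ nilradical A ∧ y - e ∈ I ^ n := by
      intro y hyt
      have : y ∈ I ^ n ⊔ nilradical A := h1 (ht ▸ Ideal.subset_span hyt)
      obtain ⟨a, ha, e, he, h'⟩ := Submodule.mem_sup.mp this
      exact ⟨e, he, by rw [show y - e = a by rw [← h']; ring]; exact ha⟩
    choose! e he1 he2 using hy
    set N' : Ideal A := Ideal.span (e '' ↑t) with hN'def
    have hN'le : N' ≤ (⊥ : Ideal A).radical := by
      rw [Ideal.span_le]
      rintro _ ⟨y, hyt, rfl⟩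
      exact he1 y hyt
    have hN'fg : N'.FG := Submodule.fg_span (t.finite_toSet.image e)
    obtain ⟨T, hT⟩ := fg_pow_le_of_le_radical hN'fg hN'le
    have hJk : J ^ k ≤ I ^ n ⊔ N' := by
      rw [← ht, Submodule.span_le]
      intro y hyt
      have hdec : y = (y - e y) + e y := by ring
      rw [hdec]
      exact Submodule.add_mem _ (Ideal.mem_sup_left (he2 y hyt))
        (Ideal.mem_sup_right (Ideal.subset_span ⟨y, hyt, rfl⟩))
    have key : ∀ s : ℕ, J ^ (k * (s + T)) ≤ I ^ (n * s) := by
      intro s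
      calc J ^ (k * (s + T)) = (J ^ k) ^ (s + T) := by rw [pow_mul]
        _ ≤ (I ^ n ⊔ N') ^ (s + T) := Ideal.pow_right_mono hJk _
        _ ≤ (I ^ n) ^ s ⊔ N' ^ T := Ideal.sup_pow_add_le_pow_sup_pow
        _ ≤ I ^ (n * s) := by
            rw [← pow_mul]
            exact sup_le le_rfl (le_trans hT bot_le)
    refine ennreal_div_le_of_forall (T := T) hk fun s => ?_
    refine le_trans (ENNReal.div_le_div_right (le_idealOrd (key s)) _) ?_
    exact le_iSup (fun m : ℕ => idealOrd I (J ^ m) / (m : ℝ≥0∞)) (k * (s + T))
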